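/- For any admissible linear functional on a convex polytope P, every nonempty face F of P has a unique source and a unique sink in the induced orientation of the graph of P restricted to F. -/

import Mathlib

open Set
open scoped Classical

variable {E : Type*} [NormedAddCommGroup E] [NormedSpace ℝ E]

/-- Maximum principle for continuous linear functionals on a convex hull. -/
lemma clm_exists_ge {A : Set E} (k : E →L[ℝ] ℝ) {x : E} (hx : x ∈ convexHull ℝ A) :
    ∃ v ∈ A, k x ≤ k v := by
  have hconv : ConvexOn ℝ (convexHull ℝ A) (fun y => k y) := by
    refine ⟨convex_convexHull ℝ A, ?_⟩
    intro x _ y _ a b _ _ _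
    simp [map_add, map_smul, smul_eq_mul]
  exact hconv.exists_ge_of_mem_convexHull (subset_convexHull ℝ A) hx

lemma clm_exists_le {A : Set E} (k : E →L[ℝ] ℝ) {x : E} (hx : x ∈ convexHull ℝ A) :
    ∃ v ∈ A, k v ≤ k x := by
  obtain ⟨v, hv, h⟩ := clm_exists_ge (-k) hx
  exact ⟨v, hv, by simpa using h⟩

/-- If a convex combination attains the max value, the support lies in the argmax set. -/
lemma support_argmax {A : Finset E} {k : E →L[ℝ] ℝ} {M : ℝ} {w : E → ℝ}
    (hw0 : ∀ y ∈ A, 0 ≤ w y) (hw1 : ∑ y ∈ A, w y = 1) (hle : ∀ y ∈ A, k y ≤ M)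
    (heq : ∑ y ∈ A, w y * k y = M) : ∀ y ∈ A, w y ≠ 0 → k y = M := by
  have hzero : ∑ y ∈ A, w y * (M - k y) = 0 := by
    have : ∑ y ∈ A, w y * (M - k y) = (∑ y ∈ A, w y) * M - ∑ y ∈ A, w y * k y := by
      rw [Finset.sum_mul]
      rw [← Finset.sum_sub_distrib]
      congr 1; ext y; ring
    rw [this, hw1, heq]; ring
  intro y hy hwy
  have h1 := (Finset.sum_eq_zero_iff_of_nonneg (fun i hi => mul_nonneg (hw0 i hi) (by linarith [hle i hi]))).1 hzero y hy
  rcases mul_eq_zero.1 h1 with h | h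
  · exact absurd h hwy
  · linarith

/-- The convex hull of the argmax vertices is the argmax face. -/
lemma hull_argmax {A : Finset E} (hA : A.Nonempty) (k : E →L[ℝ] ℝ) :
    (convexHull ℝ ↑(A.filter (fun v => ∀ u ∈ A, k u ≤ k v)) : Set E)
      = {x ∈ convexHull ℝ (↑A : Set E) | ∀ y ∈ convexHull ℝ (↑A : Set E), k y ≤ k x} := by
  obtain ⟨b, hbA, hbmax⟩ := A.exists_max_image k hA
  set B := A.filter (fun v => ∀ u ∈ A, k u ≤ k v) with hB
  have hbB : b ∈ B := Finset.mem_filter.2 ⟨hbA, hbmax⟩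
  have hBval : ∀ v ∈ B, k v = k b := by
    intro v hv
    rcases Finset.mem_filter.1 hv with ⟨hvA, hvmax⟩
    exact le_antisymm (hbmax v hvA) (hvmax b hbA)
  have hBsub : (↑B : Set E) ⊆ (↑A : Set E) := by
    intro x hx; exact Finset.mem_coe.2 (Finset.mem_filter.1 (Finset.mem_coe.1 hx)).1
  apply Set.Subset.antisymm
  · intro x hx
    have hxA : x ∈ convexHull ℝ (↑A : Set E) := convexHull_mono hBsub hx
    have hxge : k b ≤ k x := by
      obtain ⟨v, hv, hvx⟩ := clm_exists_le k hx
      rw [← hBval v hv]; exact hvx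
    refine ⟨hxA, fun y hy => ?_⟩
    obtain ⟨v, hv, hyv⟩ := clm_exists_ge k hy
    exact le_trans (le_trans hyv (hbmax v hv)) hxge
  · rintro x ⟨hxA, hxmax⟩
    have hxval : k x = k b := le_antisymm
      (by obtain ⟨v, hv, h⟩ := clm_exists_ge k hxA; exact le_trans h (hbmax v hv))
      (hxmax b (subset_convexHull ℝ _ hbA))
    obtain ⟨w, hw0, hw1, hwx⟩ := Finset.mem_convexHull.1 hxA
    have hsum : ∑ y ∈ A, w y * k y = k b := by
      have : k x = ∑ y ∈ A, w y * k y := by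
        rw [← hwx, Finset.centerMass_eq_of_sum_1 _ _ hw1, map_sum]
        simp [smul_eq_mul]
      rw [← this, hxval]
    have hsupp := support_argmax hw0 hw1 (fun y hy => hbmax y hy) hsum
    have hmemB : ∀ y ∈ A, w y ≠ 0 → y ∈ B := by
      intro y hy hwy
      refine Finset.mem_filter.2 ⟨hy, fun u hu => ?_⟩
      rw [hsupp y hy hwy]
      exact hbmax u hu
    have hzero : ∀ y ∈ A, y ∉ B → w y = 0 := by
      intro y hy hyB
      by_contra h
      exact hyB (hmemB y hy h)
    refine Finset.mem_convexHull'.2 ⟨w, fun y hy => hw0 y (Finset.filter_subset _ _ hy), ?_, ?_⟩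
    · rw [← hw1]
      exact (Finset.sum_subset (Finset.filter_subset _ _) hzero)
    · rw [← hwx, Finset.centerMass_eq_of_sum_1 _ _ hw1]
      refine Finset.sum_subset (Finset.filter_subset _ _) ?_
      intro y hy hyB
      rw [hzero y hy hyB, zero_smul]

/-- Argmax sets are convex. -/
lemma argmax_convex {G : Set E} (hG : Convex ℝ G) (k : E →L[ℝ] ℝ) :
    Convex ℝ {x ∈ G | ∀ y ∈ G, k y ≤ k x} := by
  rintro x ⟨hxG, hx⟩ y ⟨hyG, hy⟩ a b ha hb hab
  refine ⟨hG hxG hyG ha hb hab, fun z hz => ?_⟩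
  have h1 : k z = a * k z + b * k z := by rw [← add_mul, hab, one_mul]
  have h2 : k (a • x + b • y) = a * k x + b * k y := by
    simp [map_add, map_smul, smul_eq_mul]
  rw [h2, h1]
  exact add_le_add (mul_le_mul_of_nonneg_left (hx z hz) ha)
    (mul_le_mul_of_nonneg_left (hy z hz) hb)

/-- In a polytope, the argmax face of an exposed face is exposed. -/
lemma exposed_trans {S : Finset E} {G : Set E}
    (hG : IsExposed ℝ (convexHull ℝ (↑S : Set E)) G) (k : E →L[ℝ] ℝ)
    (hne : {x ∈ G | ∀ y ∈ G, k y ≤ k x}.Nonempty) :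
    IsExposed ℝ (convexHull ℝ (↑S : Set E)) {x ∈ G | ∀ y ∈ G, k y ≤ k x} := by
  set P := convexHull ℝ (↑S : Set E) with hPdef
  obtain ⟨e₀, he₀G, he₀max⟩ := hne
  obtain ⟨g, hGeq⟩ := hG ⟨e₀, he₀G⟩
  have he₀P : e₀ ∈ P := (hGeq ▸ he₀G).1
  have hgmax : ∀ y ∈ P, g y ≤ g e₀ := (hGeq ▸ he₀G).2
  have hgG : ∀ x ∈ G, g x = g e₀ := by
    intro x hx
    have hx' := hGeq ▸ hx
    exact le_antisymm (hgmax x hx'.1) (hx'.2 e₀ he₀P)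
  have hgmem : ∀ v ∈ P, g v = g e₀ → v ∈ G := by
    intro v hv hveq
    rw [hGeq]
    exact ⟨hv, fun y hy => hveq ▸ hgmax y hy⟩
  have hSP : (↑S : Set E) ⊆ P := subset_convexHull ℝ _
  -- choose lam
  have hlam : ∃ lam : ℝ, 0 < lam ∧ ∀ v ∈ S, v ∉ G →
      lam * g v + k v < lam * g e₀ + k e₀ := by
    by_cases hA : (S.filter (fun v => v ∉ G)).Nonempty
    · set A := S.filter (fun v => v ∉ G) with hAdef
      have hq : ∀ v ∈ A, g v < g e₀ := by
        intro v hv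
        rcases Finset.mem_filter.1 hv with ⟨hvS, hvG⟩
        rcases lt_or_eq_of_le (hgmax v (hSP hvS)) with h | h
        · exact h
        · exact absurd (hgmem v (hSP hvS) h) hvG
      obtain ⟨c, hc⟩ := A.exists_max_image (fun v => (k v - k e₀) / (g e₀ - g v)) hA
      refine ⟨max 1 ((k c - k e₀) / (g e₀ - g c) + 1), lt_of_lt_of_le zero_lt_one (le_max_left _ _), ?_⟩
      intro v hvS hvG
      have hvA : v ∈ A := Finset.mem_filter.2 ⟨hvS, hvG⟩
      have hd : 0 < g e₀ - g v := by linarith [hq v hvA]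
      have h1 : (k v - k e₀) / (g e₀ - g v) < max 1 ((k c - k e₀) / (g e₀ - g c) + 1) :=
        lt_of_le_of_lt (hc.2 v hvA) (lt_of_lt_of_le (lt_add_one _) (le_max_right _ _))
      have h2 : k v - k e₀ < max 1 ((k c - k e₀) / (g e₀ - g c) + 1) * (g e₀ - g v) := by
        rw [div_lt_iff₀ hd] at h1; linarith
      linarith
    · refine ⟨1, zero_lt_one, fun v hvS hvG => ?_⟩
      exact absurd (Finset.mem_filter.2 ⟨hvS, hvG⟩ : v ∈ S.filter (fun v => v ∉ G))
        (by rw [Finset.not_nonempty_iff_eq_empty] at hA; simp [hA])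
  obtain ⟨lam, hlampos, hlamlt⟩ := hlam
  set k' : E →L[ℝ] ℝ := lam • g + k with hk'def
  have hk'app : ∀ x, k' x = lam * g x + k x := fun x => by
    simp [hk'def, smul_eq_mul]
  have hkG : ∀ y ∈ G, k y ≤ k e₀ := he₀max
  -- max value of k' on P is k' e₀
  have hE'val : ∀ x ∈ {x ∈ G | ∀ y ∈ G, k y ≤ k x}, k' x = k' e₀ := by
    rintro x ⟨hxG, hxmax⟩
    have : k x = k e₀ := le_antisymm (hkG x hxG) (hxmax e₀ he₀G)
    rw [hk'app, hk'app, hgG x hxG, this]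
  have hub : ∀ y ∈ P, k' y ≤ k' e₀ := by
    intro y hy
    obtain ⟨v, hvS, hyv⟩ := clm_exists_ge k' hy
    refine le_trans hyv ?_
    by_cases hvG : v ∈ G
    · rw [hk'app, hk'app, hgG v hvG]
      have := hkG v hvG
      linarith
    · rw [hk'app, hk'app]
      exact le_of_lt (hlamlt v hvS hvG)
  intro _
  refine ⟨k', ?_⟩
  apply Set.Subset.antisymm
  · rintro x hx
    have hxG := hx.1
    refine ⟨(hGeq ▸ hxG).1, fun y hy => ?_⟩
    rw [hE'val x hx]
    exact hub y hy
  · rintro x ⟨hxP, hxmax⟩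
    have hxval : k' x = k' e₀ := le_antisymm (hub x hxP) (hxmax e₀ he₀P)
    obtain ⟨w, hw0, hw1, hwx⟩ := Finset.mem_convexHull.1 (hPdef ▸ hxP)
    have hsum : ∑ y ∈ S, w y * k' y = k' e₀ := by
      have : k' x = ∑ y ∈ S, w y * k' y := by
        rw [← hwx, Finset.centerMass_eq_of_sum_1 _ _ hw1, map_sum]
        simp [smul_eq_mul]
      rw [← this, hxval]
    have hsupp := support_argmax hw0 hw1 (fun y hy => hub y (hSP hy)) hsum
    have hmemE' : ∀ y ∈ S, w y ≠ 0 → y ∈ {x ∈ G | ∀ z ∈ G, k z ≤ k x} := by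
      intro y hyS hwy
      have hy' := hsupp y hyS hwy
      by_cases hyG : y ∈ G
      · have hky : k y = k e₀ := by
          rw [hk'app, hk'app, hgG y hyG] at hy'
          linarith
        exact ⟨hyG, fun z hz => hky ▸ hkG z hz⟩
      · exact absurd hy' (ne_of_lt (by rw [hk'app, hk'app]; exact hlamlt y hyS hyG))
    have hE'conv : Convex ℝ {x ∈ G | ∀ z ∈ G, k z ≤ k x} :=
      argmax_convex (hG.convex (convex_convexHull ℝ _)) k
    set S' := S.filter (fun y => w y ≠ 0) with hS'def
    have hxS' : x ∈ convexHull ℝ (↑S' : Set E) := by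
      refine Finset.mem_convexHull'.2 ⟨w, fun y hy => hw0 y (Finset.filter_subset _ _ hy), ?_, ?_⟩
      · rw [← hw1]
        refine Finset.sum_subset (Finset.filter_subset _ _) ?_
        intro y hy hyS'
        by_contra h
        exact hyS' (Finset.mem_filter.2 ⟨hy, h⟩)
      · rw [← hwx, Finset.centerMass_eq_of_sum_1 _ _ hw1]
        refine Finset.sum_subset (Finset.filter_subset _ _) ?_
        intro y hy hyS'
        have : w y = 0 := by
          by_contra h
          exact hyS' (Finset.mem_filter.2 ⟨hy, h⟩)
        rw [this, zero_smul]
    have hsub : (↑S' : Set E) ⊆ {x ∈ G | ∀ z ∈ G, k z ≤ k x} := by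
      intro y hy
      rcases Finset.mem_filter.1 (Finset.mem_coe.1 hy) with ⟨hyS, hwy⟩
      exact hmemE' y hyS hwy
    have := convexHull_mono hsub hxS'
    rwa [hE'conv.convexHull_eq] at this

/-- A nonempty exposed face of a polytope is the hull of a sub-Finset of its vertex set. -/
lemma face_hull {S : Finset E} {G : Set E}
    (hG : IsExposed ℝ (convexHull ℝ (↑S : Set E)) G) (hne : G.Nonempty) :
    ∃ B : Finset E, G = convexHull ℝ (↑B : Set E) := by
  obtain ⟨g, hGeq⟩ := hG hne
  obtain ⟨x, hx⟩ := hne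
  have hSne : S.Nonempty := by
    by_contra h
    rw [Finset.not_nonempty_iff_eq_empty] at h
    have := (hGeq ▸ hx).1
    simp [h] at this
  exact ⟨S.filter (fun v => ∀ u ∈ S, g u ≤ g v), by rw [hull_argmax hSne g, ← hGeq]⟩

/-- Minkowski: a polytope is the hull of its (finitely many) extreme points. -/
lemma polytope_minkowski {G : Set E} (B : Finset E) (hG : G = convexHull ℝ (↑B : Set E)) :
    G = convexHull ℝ (G.extremePoints ℝ) ∧ (G.extremePoints ℝ).Finite := by
  have hfin : (G.extremePoints ℝ).Finite :=
    Set.Finite.subset B.finite_toSet (hG ▸ extremePoints_convexHull_subset)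
  have hcomp : IsCompact G := hG ▸ B.finite_toSet.isCompact_convexHull ℝ
  have hconv : Convex ℝ G := hG ▸ convex_convexHull ℝ _
  have := closure_convexHull_extremePoints hcomp hconv
  refine ⟨?_, hfin⟩
  conv_lhs => rw [← this]
  rw [IsClosed.closure_eq (hfin.isClosed_convexHull ℝ)]

lemma extremePoints_mono' {A B : Set E} (hBA : B ⊆ A) {x : E}
    (hx : x ∈ A.extremePoints ℝ) (hxB : x ∈ B) : x ∈ B.extremePoints ℝ :=
  inter_extremePoints_subset_extremePoints_of_subset hBA ⟨hxB, hx⟩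

/-- Every extreme point of a polytope admits an exposing functional (w.r.t. a finite
generating set). -/
lemma exists_exposer {G : Set E} {T : Set E} (hT : T.Finite)
    (hGT : G = convexHull ℝ T) {w : E} (hw : w ∈ G.extremePoints ℝ) :
    ∃ ψ : E →L[ℝ] ℝ, ∀ v ∈ T, v ≠ w → ψ v < ψ w := by
  have hwnot : w ∉ convexHull ℝ (T \ {w}) := by
    intro hmem
    have hsub : convexHull ℝ (T \ {w}) ⊆ G := by
      rw [hGT]; exact convexHull_mono Set.diff_subset
    have hw' : w ∈ (convexHull ℝ (T \ {w})).extremePoints ℝ :=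
      extremePoints_mono' hsub hw hmem
    have := extremePoints_convexHull_subset hw'
    exact this.2 rfl
  obtain ⟨ψ, u, hu1, hu2⟩ := geometric_hahn_banach_closed_point
    (convex_convexHull ℝ _) ((hT.diff (t := {w})).isClosed_convexHull ℝ) hwnot
  refine ⟨ψ, fun v hv hvw => ?_⟩
  have : v ∈ convexHull ℝ (T \ {w}) := subset_convexHull ℝ _ ⟨hv, hvw⟩
  linarith [hu1 v this]

/-- A nonempty exposed face is the hull of its extreme-point Finset. -/
lemma face_ext_hull {S : Finset E} {G : Set E} {T : Finset E}
    (hG : IsExposed ℝ (convexHull ℝ (↑S : Set E)) G)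
    (hT : (↑T : Set E) = G.extremePoints ℝ) (hne : G.Nonempty) :
    G = convexHull ℝ (↑T : Set E) := by
  obtain ⟨B, hB⟩ := face_hull hG hne
  rw [hT]
  exact (polytope_minkowski B hB).1

/-- Data for the argmax face of an exposed face of a polytope. -/
lemma argmax_face_data {S : Finset E} {G : Set E} {T : Finset E}
    (hG : IsExposed ℝ (convexHull ℝ (↑S : Set E)) G)
    (hT : (↑T : Set E) = G.extremePoints ℝ)
    (hGhull : G = convexHull ℝ (↑T : Set E)) (hTne : T.Nonempty) (h : E →L[ℝ] ℝ) :
    IsExposed ℝ (convexHull ℝ (↑S : Set E))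
        (convexHull ℝ (↑(T.filter (fun v => ∀ u ∈ T, h u ≤ h v)) : Set E)) ∧
      (↑(T.filter (fun v => ∀ u ∈ T, h u ≤ h v)) : Set E)
        = (convexHull ℝ (↑(T.filter (fun v => ∀ u ∈ T, h u ≤ h v)) : Set E)).extremePoints ℝ ∧
      convexHull ℝ (↑(T.filter (fun v => ∀ u ∈ T, h u ≤ h v)) : Set E) ⊆ G := by
  set B := T.filter (fun v => ∀ u ∈ T, h u ≤ h v) with hBdef
  set E' := convexHull ℝ (↑B : Set E) with hE'def
  have hE'eq : E' = {x ∈ G | ∀ y ∈ G, h y ≤ h x} := by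
    rw [hE'def, hull_argmax hTne h, ← hGhull]
  have hE'subG : E' ⊆ G := fun x hx => (hE'eq ▸ hx).1
  obtain ⟨b, hbT, hbmax⟩ := T.exists_max_image h hTne
  have hbB : b ∈ B := Finset.mem_filter.2 ⟨hbT, hbmax⟩
  have hbE' : b ∈ E' := subset_convexHull ℝ _ (Finset.mem_coe.2 hbB)
  have hexp : IsExposed ℝ (convexHull ℝ (↑S : Set E)) E' := by
    rw [hE'eq]
    exact exposed_trans hG h ⟨b, hE'eq ▸ hbE'⟩
  refine ⟨hexp, ?_, hE'subG⟩
  apply Set.Subset.antisymm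
  · intro v hv
    have hvB : v ∈ B := Finset.mem_coe.1 hv
    have hvT : v ∈ T := Finset.mem_filter.1 hvB |>.1
    have hvG : v ∈ G.extremePoints ℝ := hT ▸ (Finset.mem_coe.2 hvT)
    exact extremePoints_mono' hE'subG hvG (subset_convexHull ℝ _ hv)
  · intro v hv
    exact extremePoints_convexHull_subset hv

/-- Key lemma: every exposed face with at least two vertices has an edge at any
given vertex. -/
lemma edge_lemma {S : Finset E} (n : ℕ) :
    ∀ (G : Set E) (T : Finset E) (w u' : E),
      T.card ≤ n →
      IsExposed ℝ (convexHull ℝ (↑S : Set E)) G →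
      (↑T : Set E) = G.extremePoints ℝ →
      w ∈ T → u' ∈ T → u' ≠ w →
      ∃ u ∈ T, u ≠ w ∧ IsExposed ℝ (convexHull ℝ (↑S : Set E)) (segment ℝ w u) := by
  induction n with
  | zero =>
    intro G T w u' hcard _ _ hw _ _
    exact absurd (Finset.card_pos.2 ⟨w, hw⟩) (by omega)
  | succ n IH =>
    intro G T w u' hcard hG hT hw hu' hne
    have hwext : w ∈ G.extremePoints ℝ := hT ▸ Finset.mem_coe.2 hw
    have hGne : G.Nonempty := ⟨w, hwext.1⟩
    have hGhull : G = convexHull ℝ (↑T : Set E) := face_ext_hull hG hT hGne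
    by_cases hsmall : T.card ≤ 2
    · -- T = {u', w}, G is a segment
      have hsub : ({u', w} : Finset E) ⊆ T := by
        intro x hx
        rcases Finset.mem_insert.1 hx with h | h
        · exact h ▸ hu'
        · exact (Finset.mem_singleton.1 h) ▸ hw
      have hcard2 : ({u', w} : Finset E).card = 2 := Finset.card_pair hne
      have hTeq : ({u', w} : Finset E) = T :=
        Finset.eq_of_subset_of_card_le hsub (by omega)
      have hseg : G = segment ℝ w u' := by
        rw [hGhull, ← hTeq]
        have : (↑({u', w} : Finset E) : Set E) = {u', w} := by simp
        rw [this, Set.pair_comm u' w, convexHull_pair]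
      exact ⟨u', hu', hne, hseg ▸ hG⟩
    · -- main construction
      push_neg at hsmall
      obtain ⟨ψ, hψ⟩ := exists_exposer T.finite_toSet hGhull hwext
      set R := T.erase w with hRdef
      have hu'R : u' ∈ R := Finset.mem_erase.2 ⟨hne, hu'⟩
      have hRψ : ∀ v ∈ R, ψ v < ψ w := fun v hv =>
        hψ v (Finset.mem_coe.2 (Finset.mem_of_mem_erase hv)) (Finset.ne_of_mem_erase hv)
      obtain ⟨v₁, hv₁R, hv₁max⟩ := R.exists_max_image ψ ⟨u', hu'R⟩
      have hv₁T : v₁ ∈ T := Finset.mem_of_mem_erase hv₁R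
      have hv₁w : v₁ ≠ w := Finset.ne_of_mem_erase hv₁R
      have hv₁ext : v₁ ∈ G.extremePoints ℝ := hT ▸ Finset.mem_coe.2 hv₁T
      obtain ⟨χ, hχ⟩ := exists_exposer T.finite_toSet hGhull hv₁ext
      set Q := R.filter (fun v => χ w < χ v) with hQdef
      have hv₁Q : v₁ ∈ Q := Finset.mem_filter.2 ⟨hv₁R,
        hχ w (Finset.mem_coe.2 hw) (Ne.symm hv₁w)⟩
      set r : E → ℝ := fun v => (ψ w - ψ v) / (χ v - χ w) with hrdef
      obtain ⟨vs, hvsQ, hvsmin⟩ := Q.exists_min_image r ⟨v₁, hv₁Q⟩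
      rcases Finset.mem_filter.1 hvsQ with ⟨hvsR, hvsχ⟩
      have hvsT : vs ∈ T := Finset.mem_of_mem_erase hvsR
      have hvsw : vs ≠ w := Finset.ne_of_mem_erase hvsR
      set t := r vs with htdef
      have hdvs : 0 < χ vs - χ w := by linarith
      have htpos : 0 < t := div_pos (by linarith [hRψ vs hvsR]) hdvs
      set h : E →L[ℝ] ℝ := ψ + t • χ with hhdef
      have happ : ∀ x, h x = ψ x + t * χ x := fun x => by
        simp [hhdef, smul_eq_mul]
      have hkey : ∀ v ∈ T, h v ≤ h w := by
        intro v hvT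
        by_cases hvw : v = w
        · rw [hvw]
        · have hvR : v ∈ R := Finset.mem_erase.2 ⟨hvw, hvT⟩
          have hψv : ψ v < ψ w := hRψ v hvR
          by_cases hχv : χ w < χ v
          · have hvQ : v ∈ Q := Finset.mem_filter.2 ⟨hvR, hχv⟩
            have h1 : t ≤ r v := hvsmin v hvQ
            have hd : 0 < χ v - χ w := by linarith
            have h2 : t * (χ v - χ w) ≤ ψ w - ψ v := by
              rw [hrdef] at h1
              calc t * (χ v - χ w) ≤ (ψ w - ψ v) / (χ v - χ w) * (χ v - χ w) :=
                    mul_le_mul_of_nonneg_right h1 (le_of_lt hd)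
                _ = ψ w - ψ v := div_mul_cancel₀ _ (ne_of_gt hd)
            rw [happ, happ]; nlinarith
          · push_neg at hχv
            have : t * χ v ≤ t * χ w := mul_le_mul_of_nonneg_left hχv (le_of_lt htpos)
            rw [happ, happ]; linarith
      have heqs : h vs = h w := by
        have : t * (χ vs - χ w) = ψ w - ψ vs := div_mul_cancel₀ _ (ne_of_gt hdvs)
        rw [happ, happ]; linarith
      obtain ⟨hE'exp, hE'ext, hE'subG⟩ := argmax_face_data hG hT hGhull ⟨w, hw⟩ h
      set B := T.filter (fun v => ∀ u ∈ T, h u ≤ h v) with hBdef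
      have hwB : w ∈ B := Finset.mem_filter.2 ⟨hw, hkey⟩
      have hvsB : vs ∈ B := Finset.mem_filter.2 ⟨hvsT, fun u hu => heqs ▸ hkey u hu⟩
      by_cases hgood : ∃ v₂ ∈ T, v₂ ∉ B
      · obtain ⟨v₂, hv₂T, hv₂B⟩ := hgood
        have hBT : B ⊆ T := Finset.filter_subset _ _
        have hBcard : B.card < T.card := Finset.card_lt_card ⟨hBT, fun hsub => hv₂B (hsub hv₂T)⟩
        obtain ⟨u, huB, hune, huexp⟩ := IH _ B w vs (by omega) hE'exp hE'ext hwB hvsB hvsw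
        exact ⟨u, hBT huB, hune, huexp⟩
      · push_neg at hgood
        exfalso
        have hRcard : 1 < R.card := by
          rw [hRdef, Finset.card_erase_of_mem hw]; omega
        obtain ⟨v₂, hv₂R, hv₂v₁⟩ := Finset.exists_mem_ne hRcard v₁
        have hv₂T : v₂ ∈ T := Finset.mem_of_mem_erase hv₂R
        have heq1 : h v₁ = h w :=
          le_antisymm (hkey v₁ hv₁T) ((Finset.mem_filter.1 (hgood v₁ hv₁T)).2 w hw)
        have heq2 : h v₂ = h w :=
          le_antisymm (hkey v₂ hv₂T) ((Finset.mem_filter.1 (hgood v₂ hv₂T)).2 w hw)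
        have hχ21 : χ v₂ < χ v₁ := hχ v₂ (Finset.mem_coe.2 hv₂T) hv₂v₁
        have hψ21 : ψ v₂ ≤ ψ v₁ := hv₁max v₂ hv₂R
        have hmul : t * χ v₂ < t * χ v₁ := mul_lt_mul_of_pos_left hχ21 htpos
        rw [happ, happ] at heq1 heq2
        linarith

/-- Key lemma: from a non-maximal vertex of an exposed face there is an improving edge. -/
lemma up_lemma {S : Finset E} (f : E →L[ℝ] ℝ) (n : ℕ) :
    ∀ (G : Set E) (T : Finset E) (w v' : E),
      T.card ≤ n →
      IsExposed ℝ (convexHull ℝ (↑S : Set E)) G →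
      (↑T : Set E) = G.extremePoints ℝ →
      w ∈ T → v' ∈ T → f w < f v' →
      ∃ u ∈ T, u ≠ w ∧ f w < f u ∧
        IsExposed ℝ (convexHull ℝ (↑S : Set E)) (segment ℝ w u) := by
  induction n with
  | zero =>
    intro G T w v' hcard _ _ hw _ _
    exact absurd (Finset.card_pos.2 ⟨w, hw⟩) (by omega)
  | succ n IH =>
    intro G T w v' hcard hG hT hw hv' hfv'
    have hne : v' ≠ w := fun h => by rw [h] at hfv'; exact lt_irrefl _ hfv'
    have hwext : w ∈ G.extremePoints ℝ := hT ▸ Finset.mem_coe.2 hw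
    have hGne : G.Nonempty := ⟨w, hwext.1⟩
    have hGhull : G = convexHull ℝ (↑T : Set E) := face_ext_hull hG hT hGne
    by_cases hsmall : T.card ≤ 2
    · -- T = {v', w}, G is a segment
      have hsub : ({v', w} : Finset E) ⊆ T := by
        intro x hx
        rcases Finset.mem_insert.1 hx with h | h
        · exact h ▸ hv'
        · exact (Finset.mem_singleton.1 h) ▸ hw
      have hcard2 : ({v', w} : Finset E).card = 2 := Finset.card_pair hne
      have hTeq : ({v', w} : Finset E) = T :=
        Finset.eq_of_subset_of_card_le hsub (by omega)
      have hseg : G = segment ℝ w v' := by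
        rw [hGhull, ← hTeq]
        have : (↑({v', w} : Finset E) : Set E) = {v', w} := by simp
        rw [this, Set.pair_comm v' w, convexHull_pair]
      exact ⟨v', hv', hne, hfv', hseg ▸ hG⟩
    · push_neg at hsmall
      obtain ⟨ψ, hψ⟩ := exists_exposer T.finite_toSet hGhull hwext
      set R := T.erase w with hRdef
      have hv'R : v' ∈ R := Finset.mem_erase.2 ⟨hne, hv'⟩
      have hRψ : ∀ v ∈ R, ψ v < ψ w := fun v hv =>
        hψ v (Finset.mem_coe.2 (Finset.mem_of_mem_erase hv)) (Finset.ne_of_mem_erase hv)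
      set r : E → ℝ := fun v => (f v - f w) / (ψ w - ψ v) with hrdef
      obtain ⟨vs, hvsR, hvsmax⟩ := R.exists_max_image r ⟨v', hv'R⟩
      have hvsT : vs ∈ T := Finset.mem_of_mem_erase hvsR
      have hvsw : vs ≠ w := Finset.ne_of_mem_erase hvsR
      set t := r vs with htdef
      have hdvs : 0 < ψ w - ψ vs := by linarith [hRψ vs hvsR]
      have htpos : 0 < t := by
        have h1 : 0 < r v' := div_pos (by linarith) (by linarith [hRψ v' hv'R])
        exact lt_of_lt_of_le h1 (hvsmax v' hv'R)
      have hfvs : f w < f vs := by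
        have : t * (ψ w - ψ vs) = f vs - f w := div_mul_cancel₀ _ (ne_of_gt hdvs)
        nlinarith
      set h : E →L[ℝ] ℝ := f + t • ψ with hhdef
      have happ : ∀ x, h x = f x + t * ψ x := fun x => by
        simp [hhdef, smul_eq_mul]
      have hkey : ∀ v ∈ T, h v ≤ h w := by
        intro v hvT
        by_cases hvw : v = w
        · rw [hvw]
        · have hvR : v ∈ R := Finset.mem_erase.2 ⟨hvw, hvT⟩
          have hd : 0 < ψ w - ψ v := by linarith [hRψ v hvR]
          have h1 : r v ≤ t := hvsmax v hvR
          have h2 : f v - f w ≤ t * (ψ w - ψ v) := by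
            rw [hrdef] at h1
            calc f v - f w = (f v - f w) / (ψ w - ψ v) * (ψ w - ψ v) :=
                  (div_mul_cancel₀ _ (ne_of_gt hd)).symm
              _ ≤ t * (ψ w - ψ v) := mul_le_mul_of_nonneg_right h1 (le_of_lt hd)
          rw [happ, happ]; linarith
      have heqs : h vs = h w := by
        have : t * (ψ w - ψ vs) = f vs - f w := div_mul_cancel₀ _ (ne_of_gt hdvs)
        rw [happ, happ]; linarith
      obtain ⟨hE'exp, hE'ext, hE'subG⟩ := argmax_face_data hG hT hGhull ⟨w, hw⟩ h
      set B := T.filter (fun v => ∀ u ∈ T, h u ≤ h v) with hBdef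
      have hwB : w ∈ B := Finset.mem_filter.2 ⟨hw, hkey⟩
      have hvsB : vs ∈ B := Finset.mem_filter.2 ⟨hvsT, fun u hu => heqs ▸ hkey u hu⟩
      by_cases hgood : ∃ v₂ ∈ T, v₂ ∉ B
      · obtain ⟨v₂, hv₂T, hv₂B⟩ := hgood
        have hBT : B ⊆ T := Finset.filter_subset _ _
        have hBcard : B.card < T.card := Finset.card_lt_card ⟨hBT, fun hsub => hv₂B (hsub hv₂T)⟩
        obtain ⟨u, huB, hune, hufu, huexp⟩ := IH _ B w vs (by omega) hE'exp hE'ext hwB hvsB hfvs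
        exact ⟨u, hBT huB, hune, hufu, huexp⟩
      · push_neg at hgood
        -- all vertices lie on the tilted hyperplane: every other vertex improves f
        have himp : ∀ v ∈ R, f w < f v := by
          intro v hv
          have hvT : v ∈ T := Finset.mem_of_mem_erase hv
          have heq : h v = h w :=
            le_antisymm (hkey v hvT) ((Finset.mem_filter.1 (hgood v hvT)).2 w hw)
          rw [happ, happ] at heq
          have hd : 0 < ψ w - ψ v := by linarith [hRψ v hv]
          nlinarith
        obtain ⟨u, huT, hune, huexp⟩ :=
          edge_lemma (S := S) (n + 1) G T w v' hcard hG hT hw hv' hne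
        exact ⟨u, huT, hune, himp u (Finset.mem_erase.2 ⟨hune, huT⟩), huexp⟩

/-- `u` and `v` are the endpoints of an edge of the polytope `P`. -/
def IsPolyEdge {m : ℕ} (P : Set (EuclideanSpace ℝ (Fin m)))
    (u v : EuclideanSpace ℝ (Fin m)) : Prop :=
  u ≠ v ∧ u ∈ Set.extremePoints ℝ P ∧ v ∈ Set.extremePoints ℝ P ∧
    IsExposed ℝ P (segment ℝ u v)

/-- Unique sink for an admissible functional on a face of a polytope. -/
lemma unique_sink {m : ℕ} (S : Finset (EuclideanSpace ℝ (Fin m)))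
    (P : Set (EuclideanSpace ℝ (Fin m)))
    (hP : P = convexHull ℝ (S : Set (EuclideanSpace ℝ (Fin m))))
    (f : EuclideanSpace ℝ (Fin m) →L[ℝ] ℝ)
    (hadm : ∀ u v, IsPolyEdge P u v → f u ≠ f v)
    (F : Set (EuclideanSpace ℝ (Fin m))) (hF : IsExposed ℝ P F) (hFne : F.Nonempty) :
    ∃! v, v ∈ Set.extremePoints ℝ P ∧ v ∈ F ∧
        ∀ u, IsPolyEdge P v u → u ∈ F → f u < f v := by
  subst hP
  set P := convexHull ℝ (S : Set (EuclideanSpace ℝ (Fin m))) with hPdef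
  have hFP : F ⊆ P := hF.subset
  have hextFP : F.extremePoints ℝ ⊆ P.extremePoints ℝ :=
    hF.isExtreme.extremePoints_subset_extremePoints
  -- vertex set of F
  obtain ⟨B₀, hB₀⟩ := face_hull hF hFne
  obtain ⟨hFhull', hFfin⟩ := polytope_minkowski B₀ hB₀
  set T : Finset (EuclideanSpace ℝ (Fin m)) := hFfin.toFinset with hTdef
  have hT : (↑T : Set (EuclideanSpace ℝ (Fin m))) = F.extremePoints ℝ := hFfin.coe_toFinset
  have hFhull : F = convexHull ℝ (↑T : Set (EuclideanSpace ℝ (Fin m))) := by rw [hT]; exact hFhull'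
  have hTne : T.Nonempty := by
    by_contra h
    rw [Finset.not_nonempty_iff_eq_empty] at h
    rw [h] at hFhull
    simp at hFhull
    exact Set.not_nonempty_empty (hFhull ▸ hFne)
  obtain ⟨v₀, hv₀T, hv₀max⟩ := T.exists_max_image f hTne
  have hv₀ext : v₀ ∈ F.extremePoints ℝ := hT ▸ Finset.mem_coe.2 hv₀T
  have hv₀F : v₀ ∈ F := hv₀ext.1
  have hmaxF : ∀ y ∈ F, f y ≤ f v₀ := by
    intro y hy
    obtain ⟨v, hv, hyv⟩ := clm_exists_ge f (hFhull ▸ hy)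
    exact le_trans hyv (hv₀max v (Finset.mem_coe.1 hv))
  refine ⟨v₀, ⟨hextFP hv₀ext, hv₀F, fun u hedge huF => ?_⟩, ?_⟩
  · exact lt_of_le_of_ne (hmaxF u huF) (Ne.symm (hadm v₀ u hedge))
  · rintro w ⟨hwextP, hwF, hwsink⟩
    by_contra hwv₀
    have hwextF : w ∈ F.extremePoints ℝ := extremePoints_mono' hFP hwextP hwF
    have hwT : w ∈ T := by rw [hTdef, Set.Finite.mem_toFinset]; exact hwextF
    rcases lt_or_eq_of_le (hmaxF w hwF) with hlt | heq
    · -- w is not a maximizer: there is an improving edge, contradiction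
      obtain ⟨u, huT, hune, hufu, huexp⟩ :=
        up_lemma f T.card F T w v₀ le_rfl hF hT hwT hv₀T hlt
      have huextF : u ∈ F.extremePoints ℝ := hT ▸ Finset.mem_coe.2 huT
      have hedge : IsPolyEdge P w u :=
        ⟨Ne.symm hune, hwextP, hextFP huextF, huexp⟩
      exact absurd hufu (not_lt.2 (le_of_lt (hwsink u hedge huextF.1)))
    · -- w is a maximizer distinct from v₀: both lie in the argmax face, which has an edge
      set Emax := {x ∈ F | ∀ y ∈ F, f y ≤ f x} with hEmaxdef
      have hwE : w ∈ Emax := ⟨hwF, fun y hy => heq ▸ hmaxF y hy⟩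
      have hv₀E : v₀ ∈ Emax := ⟨hv₀F, hmaxF⟩
      have hEexp : IsExposed ℝ P Emax := exposed_trans hF f ⟨v₀, hv₀E⟩
      have hEsubF : Emax ⊆ F := fun x hx => hx.1
      obtain ⟨B₁, hB₁⟩ := face_hull hEexp ⟨v₀, hv₀E⟩
      obtain ⟨hEhull', hEfin⟩ := polytope_minkowski B₁ hB₁
      set TE : Finset (EuclideanSpace ℝ (Fin m)) := hEfin.toFinset with hTEdef
      have hTE : (↑TE : Set (EuclideanSpace ℝ (Fin m))) = Emax.extremePoints ℝ :=
        hEfin.coe_toFinset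
      have hextEF : Emax.extremePoints ℝ ⊆ P.extremePoints ℝ :=
        hEexp.isExtreme.extremePoints_subset_extremePoints
      have hwTE : w ∈ TE := by
        rw [hTEdef, Set.Finite.mem_toFinset]
        exact extremePoints_mono' hEsubF hwextF hwE
      have hv₀TE : v₀ ∈ TE := by
        rw [hTEdef, Set.Finite.mem_toFinset]
        exact extremePoints_mono' hEsubF hv₀ext hv₀E
      obtain ⟨u, huTE, hune, huexp⟩ :=
        edge_lemma (S := S) TE.card Emax TE w v₀ le_rfl hEexp hTE hwTE hv₀TE
          (fun h => hwv₀ h.symm)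
      have huextE : u ∈ Emax.extremePoints ℝ := hTE ▸ Finset.mem_coe.2 huTE
      have huE : u ∈ Emax := huextE.1
      have hedge : IsPolyEdge P w u := ⟨Ne.symm hune, hwextP, hextEF huextE, huexp⟩
      have h1 : f u < f w := hwsink u hedge (hEsubF huE)
      have h2 : f w ≤ f u := huE.2 w hwF
      linarith

/-- For any admissible linear functional `f` on a convex polytope `P` and every nonempty
(exposed) face `F` of `P`, the orientation induced by `f` restricted to `F` has a unique
source and a unique sink. -/
theorem stmt_1 {m : ℕ} (S : Finset (EuclideanSpace ℝ (Fin m)))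
    (P : Set (EuclideanSpace ℝ (Fin m)))
    (hP : P = convexHull ℝ (S : Set (EuclideanSpace ℝ (Fin m))))
    (f : EuclideanSpace ℝ (Fin m) →L[ℝ] ℝ)
    (hadm : ∀ u v, IsPolyEdge P u v → f u ≠ f v)
    (F : Set (EuclideanSpace ℝ (Fin m))) (hF : IsExposed ℝ P F) (hFne : F.Nonempty) :
    (∃! v, v ∈ Set.extremePoints ℝ P ∧ v ∈ F ∧
        ∀ u, IsPolyEdge P v u → u ∈ F → f v < f u) ∧
    (∃! v, v ∈ Set.extremePoints ℝ P ∧ v ∈ F ∧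
        ∀ u, IsPolyEdge P v u → u ∈ F → f u < f v) := by
  constructor
  · have hadm' : ∀ u v, IsPolyEdge P u v → (-f) u ≠ (-f) v := by
      intro u v hedge
      intro h
      simp only [ContinuousLinearMap.neg_apply, neg_inj] at h
      exact hadm u v hedge h
    have := unique_sink S P hP (-f) hadm' F hF hFne
    refine Exists.elim this (fun v hv => ⟨v, ?_, ?_⟩)
    · refine ⟨hv.1.1, hv.1.2.1, fun u hedge huF => ?_⟩
      have := hv.1.2.2 u hedge huF
      simpa using this
    · intro y hy
      refine hv.2 y ⟨hy.1, hy.2.1, fun u hedge huF => ?_⟩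
      have := hy.2.2 u hedge huF
      simpa using this
  · exact unique_sink S P hP f hadm F hF hFne
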